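/- Let W be C² with W ≥ 0, W(0)=W'(0)=0, W''(0)=m²>0. Suppose (uₙ) ⊂ H¹(ℝ³) satisfies: ∫W(uₙ) ≤ C, ∫|∇uₙ|² ≤ C, and ∫uₙ⁶ ≤ C (the last by Sobolev). Then ∫uₙ² is bounded. -/

import Mathlib

open MeasureTheory Real Filter Topology

noncomputable section

abbrev V3 := Fin 3 → ℝ

def pd (i : Fin 3) (f : V3 → ℝ) (x : V3) : ℝ := fderiv ℝ f x (Pi.single i 1)


lemma quad_lower (W : ℝ → ℝ) (m : ℝ) (hm : 0 < m)
    (hWsmooth : ContDiff ℝ 2 W)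
    (hW0 : W 0 = 0) (hW0' : deriv W 0 = 0) (hW0'' : deriv (deriv W) 0 = m ^ 2) :
    ∃ ε > 0, ∀ s : ℝ, |s| ≤ ε → m ^ 2 / 4 * s ^ 2 ≤ W s := by
  have h2 : ContDiff ℝ ((1 : WithTop ℕ∞) + 1) W := by
    convert hWsmooth using 2
    norm_num
  rw [contDiff_succ_iff_deriv] at h2
  obtain ⟨hWdiff, -, hW'cd⟩ := h2
  rw [contDiff_one_iff_deriv] at hW'cd
  obtain ⟨hW'diff, hW''cont⟩ := hW'cd
  have hW'cd : Continuous (deriv W) := hW'diff.continuous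
  -- find δ with deriv² W > m²/2 on (-δ, δ)
  have hmem : {s : ℝ | m ^ 2 / 2 < deriv (deriv W) s} ∈ 𝓝 (0:ℝ) := by
    apply (isOpen_lt continuous_const hW''cont).mem_nhds
    simp only [Set.mem_setOf_eq, hW0'']
    nlinarith
  rw [Metric.mem_nhds_iff] at hmem
  obtain ⟨δ, hδ, hball⟩ := hmem
  set ε := δ / 2 with hεdef
  have hε : 0 < ε := by positivity
  refine ⟨ε, hε, ?_⟩
  have hbig : ∀ s : ℝ, |s| ≤ ε → m ^ 2 / 2 < deriv (deriv W) s := by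
    intro s hs
    apply hball
    simp only [Metric.mem_ball, Real.dist_eq, sub_zero]
    calc |s| ≤ ε := hs
    _ < δ := by simp [hεdef]; linarith
  set g : ℝ → ℝ := fun s => deriv W s - m ^ 2 / 2 * s with hg
  have hgderiv : ∀ s, deriv g s = deriv (deriv W) s - m ^ 2 / 2 := by
    intro s
    rw [hg, deriv_fun_sub (hW'diff s) (by fun_prop)]
    have hd : HasDerivAt (fun s : ℝ => m ^ 2 / 2 * s) (m ^ 2 / 2) s := by
      simpa using (hasDerivAt_id s).const_mul (m ^ 2 / 2)
    rw [hd.deriv]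
  have hgcont : Continuous g := by
    rw [hg]; exact hW'cd.sub (by fun_prop)
  have hgdiff : Differentiable ℝ g := by
    rw [hg]; exact hW'diff.sub (by fun_prop)
  have hgmono : MonotoneOn g (Set.Icc (-ε) ε) := by
    apply monotoneOn_of_deriv_nonneg (convex_Icc _ _) hgcont.continuousOn
      (hgdiff.differentiableOn)
    intro s hs
    rw [interior_Icc] at hs
    have : |s| ≤ ε := abs_le.mpr ⟨hs.1.le, hs.2.le⟩
    rw [hgderiv]
    linarith [hbig s this]
  have hg0 : g 0 = 0 := by simp [hg, hW0']
  set h : ℝ → ℝ := fun s => W s - m ^ 2 / 4 * s ^ 2 with hh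
  have hhderiv : ∀ s, deriv h s = g s := by
    intro s
    rw [hh, deriv_fun_sub (hWdiff s) (by fun_prop), hg]
    have hd : HasDerivAt (fun s : ℝ => m ^ 2 / 4 * s ^ 2) (m ^ 2 / 2 * s) s := by
      have := (hasDerivAt_pow 2 s).const_mul (m ^ 2 / 4)
      refine this.congr_deriv ?_
      rw [Nat.cast_ofNat, show 2 - 1 = 1 from rfl, pow_one]
      ring
    rw [hd.deriv]
  have hhcont : Continuous h := by
    rw [hh]; exact hWsmooth.continuous.sub (by fun_prop)
  have hhdiff : Differentiable ℝ h := by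
    rw [hh]; exact hWdiff.sub (by fun_prop)
  have key : ∀ s : ℝ, |s| ≤ ε → 0 ≤ h s := by
    intro s hs
    rw [abs_le] at hs
    rcases le_total 0 s with h0s | hs0
    · have hmono : MonotoneOn h (Set.Icc 0 ε) := by
        apply monotoneOn_of_deriv_nonneg (convex_Icc _ _) hhcont.continuousOn
          hhdiff.differentiableOn
        intro t ht
        rw [interior_Icc] at ht
        obtain ⟨ht1, ht2⟩ := ht
        rw [hhderiv]
        have : g 0 ≤ g t := hgmono (Set.mem_Icc.mpr ⟨by linarith, by linarith⟩)
          (Set.mem_Icc.mpr ⟨by linarith, by linarith⟩) ht1.le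
        linarith [hg0 ▸ this]
      have := hmono (Set.mem_Icc.mpr ⟨le_refl 0, hε.le⟩) (Set.mem_Icc.mpr ⟨h0s, hs.2⟩) h0s
      have hh0 : h 0 = 0 := by simp [hh, hW0]
      linarith [hh0 ▸ this]
    · have hanti : AntitoneOn h (Set.Icc (-ε) 0) := by
        apply antitoneOn_of_deriv_nonpos (convex_Icc _ _) hhcont.continuousOn
          hhdiff.differentiableOn
        intro t ht
        rw [interior_Icc] at ht
        obtain ⟨ht1, ht2⟩ := ht
        rw [hhderiv]
        have : g t ≤ g 0 := hgmono (Set.mem_Icc.mpr ⟨by linarith, by linarith⟩)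
          (Set.mem_Icc.mpr ⟨by linarith, by linarith⟩) ht2.le
        linarith [hg0 ▸ this]
      have := hanti (Set.mem_Icc.mpr ⟨hs.1, hs0⟩) (Set.mem_Icc.mpr ⟨by linarith, le_refl 0⟩) hs0
      have hh0 : h 0 = 0 := by simp [hh, hW0]
      linarith [hh0 ▸ this]
  intro s hs
  have := key s hs
  simp only [hh] at this
  linarith

/-- If `W ≥ 0` is `C²` with `W(0) = W'(0) = 0` and `W''(0) = m² > 0`, and
`∫W(uₙ)`, `∫|∇uₙ|²`, `∫uₙ⁶` are uniformly bounded, then `∫uₙ²` is bounded. -/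
theorem L2_bound_from_W (W : ℝ → ℝ) (m C : ℝ) (hm : 0 < m)
    (hWsmooth : ContDiff ℝ 2 W) (hWpos : ∀ s : ℝ, 0 ≤ W s)
    (hW0 : W 0 = 0) (hW0' : deriv W 0 = 0) (hW0'' : deriv (deriv W) 0 = m ^ 2)
    (u : ℕ → V3 → ℝ)
    (hmeas : ∀ n, AEStronglyMeasurable (u n) volume)
    (hWint : ∀ n, Integrable (fun x : V3 => W (u n x))
      ∧ (∫ x : V3, W (u n x)) ≤ C)
    (hgrad : ∀ n, (∫ x : V3, ∑ i : Fin 3, (pd i (u n) x) ^ 2) ≤ C)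
    (h6 : ∀ n, Integrable (fun x : V3 => (u n x) ^ 6)
      ∧ (∫ x : V3, (u n x) ^ 6) ≤ C) :
    ∃ C' : ℝ, ∀ n, Integrable (fun x : V3 => (u n x) ^ 2)
      ∧ (∫ x : V3, (u n x) ^ 2) ≤ C' := by
  obtain ⟨ε, hε, hquad⟩ := quad_lower W m hm hWsmooth hW0 hW0' hW0''
  set c : ℝ := m ^ 2 / 4 with hc
  have hcpos : 0 < c := by positivity
  -- pointwise bound : u² ≤ (1/c) W(u) + ε⁻⁴ u⁶
  have hpt : ∀ (s : ℝ), s ^ 2 ≤ (1 / c) * W s + ε ^ (-(4:ℤ)) * s ^ 6 := by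
    intro s
    have hW : 0 ≤ W s := hWpos s
    have hεinv : (0:ℝ) < ε ^ (-(4:ℤ)) := by positivity
    rcases le_or_gt |s| ε with hle | hgt
    · have h1 := hquad s hle
      have h2 : 0 ≤ ε ^ (-(4:ℤ)) * s ^ 6 := by positivity
      have : s ^ 2 ≤ (1 / c) * W s := by
        rw [div_mul_eq_mul_div, le_div_iff₀ hcpos]
        nlinarith
      linarith
    · have h4 : ε ^ 4 ≤ s ^ 4 := by
        calc ε ^ 4 ≤ |s| ^ 4 := pow_le_pow_left₀ hε.le hgt.le 4
        _ = s ^ 4 := by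
          rw [← abs_pow]
          exact abs_of_nonneg (by positivity)
      have h2 : 0 ≤ (1 / c) * W s := by positivity
      have hs2 : s ^ 2 * ε ^ 4 ≤ s ^ 6 := by nlinarith [sq_nonneg s]
      have : s ^ 2 ≤ ε ^ (-(4:ℤ)) * s ^ 6 := by
        rw [zpow_neg, ← div_eq_inv_mul]
        rw [le_div_iff₀ (by positivity : (0:ℝ) < (ε:ℝ) ^ (4:ℤ))]
        push_cast
        calc s ^ 2 * ε ^ 4 ≤ s ^ 6 := hs2
        _ = s ^ 6 := rfl
      linarith
  have hCnn : 0 ≤ C := le_trans (integral_nonneg fun x => hWpos _) (hWint 0).2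
  refine ⟨(1 / c) * C + ε ^ (-(4:ℤ)) * C, fun n => ?_⟩
  have hbint : Integrable (fun x : V3 => (1 / c) * W (u n x) + ε ^ (-(4:ℤ)) * (u n x) ^ 6) :=
    ((hWint n).1.const_mul _).add ((h6 n).1.const_mul _)
  have hint : Integrable (fun x : V3 => (u n x) ^ 2) := by
    apply hbint.mono' ((hmeas n).pow 2)
    filter_upwards with x
    simp only [Pi.pow_apply, Real.norm_eq_abs]
    rw [abs_of_nonneg (by positivity : (0:ℝ) ≤ u n x ^ 2)]
    exact hpt (u n x)
  refine ⟨hint, ?_⟩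
  calc (∫ x : V3, (u n x) ^ 2)
      ≤ ∫ x : V3, ((1 / c) * W (u n x) + ε ^ (-(4:ℤ)) * (u n x) ^ 6) :=
        integral_mono hint hbint fun x => hpt (u n x)
    _ = (1 / c) * (∫ x : V3, W (u n x)) + ε ^ (-(4:ℤ)) * (∫ x : V3, (u n x) ^ 6) := by
        rw [integral_add ((hWint n).1.const_mul _) ((h6 n).1.const_mul _),
          integral_const_mul, integral_const_mul]
    _ ≤ (1 / c) * C + ε ^ (-(4:ℤ)) * C := by
        have h1 : (0:ℝ) ≤ 1 / c := by positivity
        have h2 : (0:ℝ) ≤ ε ^ (-(4:ℤ)) := by positivity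
        gcongr
        exacts [(hWint n).2, (h6 n).2]
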